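/- Let H : ℝ^N → ℝ and G : ℝ^N → ℝ be differentiable with H convex and G convex, and suppose H(ρ̃|ρ) ≤ G(ρ̃|ρ) for all ρ, ρ̃ ∈ ℝ^N. Let (ρ_n)_{n≥0} satisfy ∇G(ρ_{n+1}) − ∇G(ρ_n) = −∇H(ρ_n) for all n ≥ 0. Then the one-step inequality H(ρ_{n+1}) ≤ H(ρ) + G(ρ|ρ_n) − G(ρ|ρ_{n+1}) holds for every ρ ∈ ℝ^N and every n ≥ 0. -/

import Mathlib

open RealInnerProductSpace

/-- Bregman divergence of a differentiable function `F : ℝ^N → ℝ`: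
`F(φ₂|φ₁) = F(φ₂) − F(φ₁) − ⟨∇F(φ₁), φ₂ − φ₁⟩`. -/
noncomputable def bregman {N : ℕ} (F : EuclideanSpace ℝ (Fin N) → ℝ)
    (φ₂ φ₁ : EuclideanSpace ℝ (Fin N)) : ℝ :=
  F φ₂ - F φ₁ - ⟪gradient F φ₁, φ₂ - φ₁⟫

/-- Gradient inequality for a differentiable convex function. -/
lemma grad_ineq {N : ℕ} (f : EuclideanSpace ℝ (Fin N) → ℝ)
    (hf : Differentiable ℝ f) (hc : ConvexOn ℝ Set.univ f)
    (x y : EuclideanSpace ℝ (Fin N)) :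
    f x + ⟪gradient f x, y - x⟫ ≤ f y := by
  set v := y - x with hv
  set g : ℝ → ℝ := fun t => f (x + t • v) with hg
  have hline : ∀ t : ℝ, HasDerivAt (fun s : ℝ => x + s • v) v t := by
    intro t
    simpa using ((hasDerivAt_id t).smul_const v).const_add x
  have hgd : HasDerivAt g ⟪gradient f x, v⟫ 0 := by
    have hF : HasFDerivAt f (InnerProductSpace.toDual ℝ _ (gradient f x)) x :=
      (hasGradientAt_iff_hasFDerivAt.mp (hf x).hasGradientAt)
    have hF' : HasFDerivAt f (InnerProductSpace.toDual ℝ _ (gradient f x)) (x + (0:ℝ) • v) := by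
      simpa using hF
    have := hF'.comp_hasDerivAt 0 (hline 0)
    exact this
  have hgc : ConvexOn ℝ Set.univ g := by
    have := hc.comp_affineMap (AffineMap.lineMap x y)
    have heq : g = f ∘ (AffineMap.lineMap x y : ℝ →ᵃ[ℝ] EuclideanSpace ℝ (Fin N)) := by
      funext t
      simp [g, AffineMap.lineMap_apply, hv, add_comm]
    rw [heq]
    simpa using this
  have hsl := hgc.le_slope_of_hasDerivAt (Set.mem_univ (0:ℝ)) (Set.mem_univ (1:ℝ))
    zero_lt_one hgd
  have hs : slope g 0 1 = g 1 - g 0 := by simp [slope_def_field]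
  have hg0 : g 0 = f x := by simp [g]
  have hg1 : g 1 = f y := by simp [g, hv]
  rw [hs, hg0, hg1] at hsl
  linarith

/-- one-step inequality for Bregman gradient descent with convex
objective `H` and convex movement limiter `G`. -/
theorem one_step_inequality {N : ℕ} (H G : EuclideanSpace ℝ (Fin N) → ℝ)
    (hHdiff : Differentiable ℝ H) (hGdiff : Differentiable ℝ G)
    (hHconv : ConvexOn ℝ Set.univ H) (hGconv : ConvexOn ℝ Set.univ G)
    (hdom : ∀ ρ ρ' : EuclideanSpace ℝ (Fin N), bregman H ρ' ρ ≤ bregman G ρ' ρ)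
    (ρseq : ℕ → EuclideanSpace ℝ (Fin N))
    (hiter : ∀ n : ℕ,
      gradient G (ρseq (n + 1)) - gradient G (ρseq n) = -gradient H (ρseq n)) :
    ∀ (ρ : EuclideanSpace ℝ (Fin N)) (n : ℕ),
      H (ρseq (n + 1)) ≤ H ρ + bregman G ρ (ρseq n) - bregman G ρ (ρseq (n + 1)) := by
  intro ρ n
  set a := ρseq n
  set b := ρseq (n + 1)
  have h1 : H a + ⟪gradient H a, ρ - a⟫ ≤ H ρ := grad_ineq H hHdiff hHconv a ρ
  have h2 : H b - H a - ⟪gradient H a, b - a⟫ ≤ bregman G b a := hdom a b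
  have h3 : bregman G ρ a - bregman G ρ b =
      bregman G b a + ⟪-(gradient H a), ρ - b⟫ := by
    rw [← hiter n]
    simp only [bregman, inner_sub_left, inner_sub_right]
    ring
  have h4 : ⟪gradient H a, b - a⟫ - ⟪gradient H a, ρ - a⟫ = ⟪-(gradient H a), ρ - b⟫ := by
    simp only [inner_sub_right, inner_neg_left]
    ring
  linarith
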